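/- Suppose λ_a is a supergradient of the concave function R_a* at w*. Then a classifier c : X → [0,1] with W_{u,c}(a) = w* satisfies R_a(c) = R_a*(w*) if and only if c maximizes the Lagrangian R_a(c') − λ_a·W_{u,c'}(a) over all classifiers c' : X → [0,1]. In particular, any optimal c must satisfy c(x) = 1 whenever r(x,a) > λ_a·ū(x,a) and c(x) = 0 whenever r(x,a) < λ_a·ū(x,a), for all x with P(x|A=a) > 0. -/
import Mathlib


/-- Subgroup-optimal revenue R_a*(w). -/
noncomputable def Rstar {X : Type*} [Fintype X]
    (q r ubar : X → ℝ) (w : ℝ) : ℝ :=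
  sSup {v : ℝ | ∃ c : X → ℝ, (∀ x, c x ∈ Set.Icc (0:ℝ) 1) ∧
    (∑ x, q x * ubar x * c x) = w ∧ (∑ x, q x * r x * c x) = v}

lemma bddS {X : Type*} [Fintype X] (q r ubar : X → ℝ) (hq : ∀ x, 0 ≤ q x) (w : ℝ) :
    BddAbove {v : ℝ | ∃ c : X → ℝ, (∀ x, c x ∈ Set.Icc (0:ℝ) 1) ∧
      (∑ x, q x * ubar x * c x) = w ∧ (∑ x, q x * r x * c x) = v} := by
  refine ⟨∑ x, q x * |r x|, ?_⟩
  rintro v ⟨c, hc, -, rfl⟩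
  apply Finset.sum_le_sum
  intro x _
  have h0 := (hc x).1
  have h1 := (hc x).2
  have h2 : r x * c x ≤ |r x| := by
    calc r x * c x ≤ |r x * c x| := le_abs_self _
      _ = |r x| * |c x| := abs_mul _ _
      _ ≤ |r x| * 1 := by
          apply mul_le_mul_of_nonneg_left _ (abs_nonneg _)
          rw [abs_of_nonneg h0]; exact h1
      _ = |r x| := mul_one _
  have := mul_le_mul_of_nonneg_left h2 (hq x)
  nlinarith

lemma sum_mul_update {X : Type*} [Fintype X] [DecidableEq X] (g c : X → ℝ) (x₀ : X) (t : ℝ) :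
    ∑ x, g x * Function.update c x₀ t x = (∑ x, g x * c x) + g x₀ * (t - c x₀) := by
  have h : ∀ x ∈ Finset.univ, g x * Function.update c x₀ t x
      = g x * c x + (if x = x₀ then g x₀ * (t - c x₀) else 0) := by
    intro x _
    by_cases hx : x = x₀
    · subst hx; simp [Function.update_self]; ring
    · simp [Function.update_of_ne hx, hx]
  rw [Finset.sum_congr rfl h, Finset.sum_add_distrib, Finset.sum_ite_eq' Finset.univ x₀]
  simp

lemma update_mem {X : Type*} [DecidableEq X] (c : X → ℝ) (hc : ∀ x, c x ∈ Set.Icc (0:ℝ) 1)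
    (x₀ : X) (t : ℝ) (ht : t ∈ Set.Icc (0:ℝ) 1) :
    ∀ x, Function.update c x₀ t x ∈ Set.Icc (0:ℝ) 1 := by
  intro x
  by_cases hx : x = x₀
  · subst hx; simpa [Function.update_self] using ht
  · simpa [Function.update_of_ne hx] using hc x

theorem stmt8 {X : Type*} [Fintype X]
    (q : X → ℝ) (hq : ∀ x, 0 ≤ q x) (hqsum : ∑ x, q x = 1)
    (r ubar : X → ℝ) (hu : ∀ x, 0 ≤ ubar x)
    (wstar lam : ℝ) (hw : wstar ∈ Set.Icc (0:ℝ) (∑ x, q x * ubar x))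
    (hsup : ∀ w' ∈ Set.Icc (0:ℝ) (∑ x, q x * ubar x),
      Rstar q r ubar w' ≤ Rstar q r ubar wstar + lam * (w' - wstar))
    (c : X → ℝ) (hc : ∀ x, c x ∈ Set.Icc (0:ℝ) 1)
    (hcw : ∑ x, q x * ubar x * c x = wstar) :
    ((∑ x, q x * r x * c x) = Rstar q r ubar wstar ↔
      ∀ c' : X → ℝ, (∀ x, c' x ∈ Set.Icc (0:ℝ) 1) →
        (∑ x, q x * r x * c' x) - lam * (∑ x, q x * ubar x * c' x) ≤
        (∑ x, q x * r x * c x) - lam * (∑ x, q x * ubar x * c x)) ∧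
    ((∑ x, q x * r x * c x) = Rstar q r ubar wstar →
      ∀ x, 0 < q x →
        (lam * ubar x < r x → c x = 1) ∧ (r x < lam * ubar x → c x = 0)) := by
  classical
  have hrev : ∀ c' : X → ℝ, (∀ x, c' x ∈ Set.Icc (0:ℝ) 1) →
      (∑ x, q x * r x * c' x) ≤ Rstar q r ubar (∑ x, q x * ubar x * c' x) :=
    fun c' hc' => le_csSup (bddS q r ubar hq _) ⟨c', hc', rfl, rfl⟩
  have hWmem : ∀ c' : X → ℝ, (∀ x, c' x ∈ Set.Icc (0:ℝ) 1) →
      (∑ x, q x * ubar x * c' x) ∈ Set.Icc (0:ℝ) (∑ x, q x * ubar x) := by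
    intro c' hc'
    constructor
    · exact Finset.sum_nonneg fun x _ =>
        mul_nonneg (mul_nonneg (hq x) (hu x)) (hc' x).1
    · apply Finset.sum_le_sum
      intro x _
      have := mul_le_mul_of_nonneg_left (hc' x).2 (mul_nonneg (hq x) (hu x))
      simpa using this
  have key : ∀ c' : X → ℝ, (∀ x, c' x ∈ Set.Icc (0:ℝ) 1) →
      (∑ x, q x * r x * c' x) - lam * (∑ x, q x * ubar x * c' x)
        ≤ Rstar q r ubar wstar - lam * wstar := by
    intro c' hc'
    have h1 := hrev c' hc'
    have h2 := hsup _ (hWmem c' hc')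
    linarith
  have hfwd : (∑ x, q x * r x * c x) = Rstar q r ubar wstar →
      ∀ c' : X → ℝ, (∀ x, c' x ∈ Set.Icc (0:ℝ) 1) →
        (∑ x, q x * r x * c' x) - lam * (∑ x, q x * ubar x * c' x) ≤
        (∑ x, q x * r x * c x) - lam * (∑ x, q x * ubar x * c x) := by
    intro heq c' hc'
    have := key c' hc'
    rw [hcw, heq]
    exact this
  constructor
  · constructor
    · exact hfwd
    · intro hmax
      have hub : Rstar q r ubar wstar ≤ ∑ x, q x * r x * c x := by
        refine csSup_le ⟨∑ x, q x * r x * c x, c, hc, hcw, rfl⟩ ?_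
        rintro v ⟨c', hc', hw', rfl⟩
        have := hmax c' hc'
        rw [hw', hcw] at this
        linarith
      have h := hrev c hc
      rw [hcw] at h
      linarith
  · intro heq x hx
    have hmax := hfwd heq
    rw [hcw] at hmax
    constructor
    · intro hlt
      by_contra hne
      have hlt1 : c x < 1 := lt_of_le_of_ne (hc x).2 hne
      have h := hmax (Function.update c x 1)
        (update_mem c hc x 1 ⟨zero_le_one, le_refl 1⟩)
      rw [sum_mul_update (fun x => q x * r x) c x 1,
          sum_mul_update (fun x => q x * ubar x) c x 1, hcw] at h
      nlinarith [mul_pos (mul_pos hx (sub_pos.mpr hlt)) (sub_pos.mpr hlt1)]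
    · intro hlt
      by_contra hne
      have hlt0 : 0 < c x := lt_of_le_of_ne (hc x).1 (Ne.symm hne)
      have h := hmax (Function.update c x 0)
        (update_mem c hc x 0 ⟨le_refl 0, zero_le_one⟩)
      rw [sum_mul_update (fun x => q x * r x) c x 0,
          sum_mul_update (fun x => q x * ubar x) c x 0, hcw] at h
      nlinarith [mul_pos (mul_pos hx (sub_pos.mpr hlt)) hlt0]
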